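/- Let (Ω, μ) be a measure space admitting a countable measurable partition {Ωₙ}ₙ∈ℕ of Ω with 0 < μ(Ωₙ) < ∞ for every n, let H₁, H₂ be Hilbert spaces over 𝕜 such that H₁ ⊕ H₂ has a Hilbert (orthonormal) basis indexed by ℕ, and let K₁ ∈ B(H₁), K₂ ∈ B(H₂). Then there exist maps F₁ : Ω → H₁ and F₂ : Ω → H₂ such that F₁ is a continuous K₁-frame for H₁, F₂ is a continuous K₂-frame for H₂, and F₁ ⊕ F₂ is a continuous (K₁ ⊕ K₂)-frame for H₁ ⊕ H₂ (each with some positive bounds). -/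

import Mathlib

open MeasureTheory ContinuousLinearMap

/-- The direct sum operator `K₁ ⊕ K₂` on the super Hilbert space `H₁ ⊕ H₂`, mapping
`(u, v)` to `(K₁ u, K₂ v)`. -/
noncomputable def prodOp {𝕜 : Type*} [RCLike 𝕜]
    {H₁ : Type*} [NormedAddCommGroup H₁] [InnerProductSpace 𝕜 H₁]
    {H₂ : Type*} [NormedAddCommGroup H₂] [InnerProductSpace 𝕜 H₂]
    (K₁ : H₁ →L[𝕜] H₁) (K₂ : H₂ →L[𝕜] H₂) :
    WithLp 2 (H₁ × H₂) →L[𝕜] WithLp 2 (H₁ × H₂) :=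
  ((WithLp.prodContinuousLinearEquiv 2 𝕜 H₁ H₂).symm.toContinuousLinearMap).comp
    ((K₁.prodMap K₂).comp (WithLp.prodContinuousLinearEquiv 2 𝕜 H₁ H₂).toContinuousLinearMap)

/-- `F : Ω → H` is a continuous `K`-frame for `H` with bounds `A, B`. -/
def IsContKFrame {𝕜 : Type*} [RCLike 𝕜] [MeasurableSpace 𝕜] [BorelSpace 𝕜]
    {H : Type*} [NormedAddCommGroup H] [InnerProductSpace 𝕜 H] [CompleteSpace H]
    {Ω : Type*} [MeasurableSpace Ω] (μ : Measure Ω)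
    (K : H →L[𝕜] H) (F : Ω → H) (A B : ℝ) : Prop :=
  ∀ u : H, Measurable (fun ω => (inner 𝕜 (F ω) u : 𝕜)) ∧
    A * ‖ContinuousLinearMap.adjoint K u‖ ^ 2 ≤ ∫ ω, ‖(inner 𝕜 (F ω) u : 𝕜)‖ ^ 2 ∂μ ∧
    ∫ ω, ‖(inner 𝕜 (F ω) u : 𝕜)‖ ^ 2 ∂μ ≤ B * ‖u‖ ^ 2

section Aux

private theorem key_integral {𝕜 : Type*} [RCLike 𝕜] [MeasurableSpace 𝕜] [BorelSpace 𝕜]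
    {H : Type*} [NormedAddCommGroup H] [InnerProductSpace 𝕜 H] [CompleteSpace H]
    {Ω : Type*} [MeasurableSpace Ω] (μ : Measure Ω)
    (s : ℕ → Set Ω) (hsmeas : ∀ n, MeasurableSet (s n))
    (hdisj : Pairwise (Function.onFun Disjoint s))
    (hcover : (⋃ n, s n) = Set.univ)
    (hpos : ∀ n, 0 < μ (s n)) (hfin : ∀ n, μ (s n) < ⊤)
    (idx : Ω → ℕ) (hidx : ∀ n ω, ω ∈ s n ↔ idx ω = n)
    (b : HilbertBasis ℕ 𝕜 H) (T : H →L[𝕜] H)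
    (F : Ω → H)
    (hF : ∀ ω, F ω = ((Real.sqrt ((μ (s (idx ω))).toReal)⁻¹ : ℝ) : 𝕜) • T (b (idx ω)))
    (u : H) :
    Measurable (fun ω => (inner 𝕜 (F ω) u : 𝕜)) ∧
      ∫ ω, ‖(inner 𝕜 (F ω) u : 𝕜)‖ ^ 2 ∂μ = ‖ContinuousLinearMap.adjoint T u‖ ^ 2 := by
  set w := ContinuousLinearMap.adjoint T u with hw
  set c : ℕ → ℝ := fun n => Real.sqrt ((μ (s n)).toReal)⁻¹ with hc
  have hc_nonneg : ∀ n, 0 ≤ c n := fun n => Real.sqrt_nonneg _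
  have ht_pos : ∀ n, 0 < (μ (s n)).toReal := fun n =>
    ENNReal.toReal_pos (hpos n).ne' (hfin n).ne
  have hmeas_idx : Measurable idx := by
    apply measurable_to_countable'
    intro n
    have h : idx ⁻¹' {n} = s n := by ext ω; simp [hidx n ω]
    rw [h]; exact hsmeas n
  have hmeas : Measurable (fun ω => (inner 𝕜 (F ω) u : 𝕜)) := by
    have h : (fun ω => (inner 𝕜 (F ω) u : 𝕜)) =
        (fun n => (inner 𝕜 ((c n : 𝕜) • T (b n)) u : 𝕜)) ∘ idx := by
      funext ω; simp only [Function.comp_apply, hF ω]; rfl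
    rw [h]
    exact measurable_from_top.comp hmeas_idx
  set g : ℕ → ℝ := fun n => ‖(inner 𝕜 ((c n : 𝕜) • T (b n)) u : 𝕜)‖ ^ 2 with hgdef
  have hgf : ∀ ω, ‖(inner 𝕜 (F ω) u : 𝕜)‖ ^ 2 = g (idx ω) := fun ω => by rw [hF ω]
  have hg_eq : ∀ n, g n = ((μ (s n)).toReal)⁻¹ * ‖(inner 𝕜 (b n) w : 𝕜)‖ ^ 2 := by
    intro n
    have h2 : (inner 𝕜 (T (b n)) u : 𝕜) = inner 𝕜 (b n) w :=
      (ContinuousLinearMap.adjoint_inner_right T (b n) u).symm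
    rw [hgdef]
    simp only [inner_smul_left, h2, norm_mul, mul_pow, RCLike.norm_conj, RCLike.norm_ofReal,
      abs_of_nonneg (hc_nonneg n)]
    congr 1
    rw [hc]
    exact Real.sq_sqrt (inv_nonneg.2 ENNReal.toReal_nonneg)
  have hpar : HasSum (fun n => ‖(inner 𝕜 (b n) w : 𝕜)‖ ^ 2) (‖w‖ ^ 2) := by
    have h0 := b.hasSum_inner_mul_inner w w
    have h1 : ∀ n, (inner 𝕜 w (b n) : 𝕜) * inner 𝕜 (b n) w =
        ((‖(inner 𝕜 (b n) w : 𝕜)‖ ^ 2 : ℝ) : 𝕜) := by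
      intro n
      rw [← inner_conj_symm w (b n), RCLike.conj_mul]
      exact (RCLike.ofReal_pow _ _).symm
    have h2 := (RCLike.reCLM (K := 𝕜)).hasSum h0
    simp only [h1, RCLike.reCLM_apply, RCLike.ofReal_re, inner_self_eq_norm_sq] at h2
    exact h2
  have hlin : ∫⁻ ω, ENNReal.ofReal (g (idx ω)) ∂μ = ENNReal.ofReal (‖w‖ ^ 2) := by
    have h1 : ∫⁻ ω, ENNReal.ofReal (g (idx ω)) ∂μ
        = ∑' n, ∫⁻ ω in s n, ENNReal.ofReal (g (idx ω)) ∂μ := by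
      rw [← lintegral_iUnion hsmeas hdisj, hcover, Measure.restrict_univ]
    have h2 : ∀ n, ∫⁻ ω in s n, ENNReal.ofReal (g (idx ω)) ∂μ
        = ENNReal.ofReal (g n) * μ (s n) := by
      intro n
      rw [setLIntegral_congr_fun (hsmeas n)
        (fun ω hω => by rw [(hidx n ω).1 hω]), setLIntegral_const]
    have h3 : ∀ n, ENNReal.ofReal (g n) * μ (s n)
        = ENNReal.ofReal (‖(inner 𝕜 (b n) w : 𝕜)‖ ^ 2) := by
      intro n
      set t := (μ (s n)).toReal with htdef
      have hmu : μ (s n) = ENNReal.ofReal t := (ENNReal.ofReal_toReal (hfin n).ne).symm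
      have htpos : 0 < t := ht_pos n
      rw [hg_eq n, hmu, ← ENNReal.ofReal_mul (by positivity)]
      congr 1
      rw [ENNReal.toReal_ofReal htpos.le, mul_right_comm, inv_mul_cancel₀ htpos.ne', one_mul]
    rw [h1]
    simp_rw [h2, h3]
    rw [← ENNReal.ofReal_tsum_of_nonneg (fun n => by positivity) hpar.summable, hpar.tsum_eq]
  refine ⟨hmeas, ?_⟩
  have hnn : 0 ≤ᵐ[μ] fun ω => ‖(inner 𝕜 (F ω) u : 𝕜)‖ ^ 2 := ae_of_all _ fun ω => by positivity
  have hsm : AEStronglyMeasurable (fun ω => ‖(inner 𝕜 (F ω) u : 𝕜)‖ ^ 2) μ :=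
    (hmeas.norm.pow_const 2).aestronglyMeasurable
  rw [integral_eq_lintegral_of_nonneg_ae hnn hsm]
  have h : (fun ω => ENNReal.ofReal (‖(inner 𝕜 (F ω) u : 𝕜)‖ ^ 2))
      = fun ω => ENNReal.ofReal (g (idx ω)) := by
    funext ω; rw [hgf ω]
  rw [h, hlin, ENNReal.toReal_ofReal (by positivity)]

private theorem frame_of_eq {𝕜 : Type*} [RCLike 𝕜] [MeasurableSpace 𝕜] [BorelSpace 𝕜]
    {H : Type*} [NormedAddCommGroup H] [InnerProductSpace 𝕜 H] [CompleteSpace H]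
    {Ω : Type*} [MeasurableSpace Ω] (μ : Measure Ω)
    (K : H →L[𝕜] H) (F : Ω → H)
    (h : ∀ u : H, Measurable (fun ω => (inner 𝕜 (F ω) u : 𝕜)) ∧
      ∫ ω, ‖(inner 𝕜 (F ω) u : 𝕜)‖ ^ 2 ∂μ = ‖ContinuousLinearMap.adjoint K u‖ ^ 2) :
    IsContKFrame (𝕜 := 𝕜) μ K F 1 (max 1 (‖K‖ ^ 2)) := by
  intro u
  obtain ⟨hm, hi⟩ := h u
  refine ⟨hm, by rw [hi, one_mul], ?_⟩
  rw [hi]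
  have h1 : ‖ContinuousLinearMap.adjoint K u‖ ≤ ‖K‖ * ‖u‖ := by
    calc ‖ContinuousLinearMap.adjoint K u‖ ≤ ‖ContinuousLinearMap.adjoint K‖ * ‖u‖ :=
          (ContinuousLinearMap.adjoint K).le_opNorm u
      _ = ‖K‖ * ‖u‖ := by
          rw [LinearIsometryEquiv.norm_map ContinuousLinearMap.adjoint K]
  calc ‖ContinuousLinearMap.adjoint K u‖ ^ 2 ≤ (‖K‖ * ‖u‖) ^ 2 :=
        pow_le_pow_left₀ (norm_nonneg _) h1 2
    _ = ‖K‖ ^ 2 * ‖u‖ ^ 2 := by ring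
    _ ≤ max 1 (‖K‖ ^ 2) * ‖u‖ ^ 2 :=
        mul_le_mul_of_nonneg_right (le_max_right _ _) (by positivity)

private theorem prodOp_fst {𝕜 : Type*} [RCLike 𝕜]
    {H₁ : Type*} [NormedAddCommGroup H₁] [InnerProductSpace 𝕜 H₁]
    {H₂ : Type*} [NormedAddCommGroup H₂] [InnerProductSpace 𝕜 H₂]
    (K₁ : H₁ →L[𝕜] H₁) (K₂ : H₂ →L[𝕜] H₂) (x : WithLp 2 (H₁ × H₂)) :
    (prodOp K₁ K₂ x).fst = K₁ x.fst := rfl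

private theorem prodOp_snd {𝕜 : Type*} [RCLike 𝕜]
    {H₁ : Type*} [NormedAddCommGroup H₁] [InnerProductSpace 𝕜 H₁]
    {H₂ : Type*} [NormedAddCommGroup H₂] [InnerProductSpace 𝕜 H₂]
    (K₁ : H₁ →L[𝕜] H₁) (K₂ : H₂ →L[𝕜] H₂) (x : WithLp 2 (H₁ × H₂)) :
    (prodOp K₁ K₂ x).snd = K₂ x.snd := rfl

private theorem adjoint_prodOp {𝕜 : Type*} [RCLike 𝕜]
    {H₁ : Type*} [NormedAddCommGroup H₁] [InnerProductSpace 𝕜 H₁] [CompleteSpace H₁]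
    {H₂ : Type*} [NormedAddCommGroup H₂] [InnerProductSpace 𝕜 H₂] [CompleteSpace H₂]
    (K₁ : H₁ →L[𝕜] H₁) (K₂ : H₂ →L[𝕜] H₂) :
    ContinuousLinearMap.adjoint (prodOp K₁ K₂)
      = prodOp (ContinuousLinearMap.adjoint K₁) (ContinuousLinearMap.adjoint K₂) := by
  symm
  rw [ContinuousLinearMap.eq_adjoint_iff]
  intro x y
  rw [WithLp.prod_inner_apply, WithLp.prod_inner_apply]
  exact congrArg₂ (· + ·) (ContinuousLinearMap.adjoint_inner_left K₁ _ _)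
    (ContinuousLinearMap.adjoint_inner_left K₂ _ _)

end Aux

/-- If `(Ω, μ)` admits a countable measurable partition with pieces of finite positive
measure and `H₁ ⊕ H₂` has a Hilbert basis indexed by `ℕ`, then for any bounded operators
`K₁ ∈ B(H₁)`, `K₂ ∈ B(H₂)` there are maps `F₁ : Ω → H₁` and `F₂ : Ω → H₂` such that `F₁`
is a continuous `K₁`-frame, `F₂` is a continuous `K₂`-frame, and `F₁ ⊕ F₂` is a
continuous `(K₁ ⊕ K₂)`-frame, each with some positive bounds. -/
theorem exists_prod_K_frame
    {𝕜 : Type*} [RCLike 𝕜] [MeasurableSpace 𝕜] [BorelSpace 𝕜]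
    {H₁ : Type*} [NormedAddCommGroup H₁] [InnerProductSpace 𝕜 H₁] [CompleteSpace H₁]
    {H₂ : Type*} [NormedAddCommGroup H₂] [InnerProductSpace 𝕜 H₂] [CompleteSpace H₂]
    {Ω : Type*} [MeasurableSpace Ω] (μ : Measure Ω)
    (s : ℕ → Set Ω) (hsmeas : ∀ n, MeasurableSet (s n))
    (hdisj : Pairwise (Function.onFun Disjoint s))
    (hcover : (⋃ n, s n) = Set.univ)
    (hpos : ∀ n, 0 < μ (s n)) (hfin : ∀ n, μ (s n) < ⊤)
    (b : HilbertBasis ℕ 𝕜 (WithLp 2 (H₁ × H₂)))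
    (K₁ : H₁ →L[𝕜] H₁) (K₂ : H₂ →L[𝕜] H₂) :
    ∃ (F₁ : Ω → H₁) (F₂ : Ω → H₂),
      (∃ A B : ℝ, 0 < A ∧ A ≤ B ∧ IsContKFrame (𝕜 := 𝕜) μ K₁ F₁ A B) ∧
      (∃ A B : ℝ, 0 < A ∧ A ≤ B ∧ IsContKFrame (𝕜 := 𝕜) μ K₂ F₂ A B) ∧
      (∃ A B : ℝ, 0 < A ∧ A ≤ B ∧ IsContKFrame (𝕜 := 𝕜) μ (prodOp K₁ K₂)
        (fun ω => (WithLp.equiv 2 (H₁ × H₂)).symm (F₁ ω, F₂ ω)) A B) := by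
  classical
  have hex : ∀ ω : Ω, ∃ n, ω ∈ s n := fun ω =>
    Set.mem_iUnion.1 (by rw [hcover]; trivial)
  set idx : Ω → ℕ := fun ω => Nat.find (hex ω) with hidxdef
  have hidx : ∀ n ω, ω ∈ s n ↔ idx ω = n := by
    intro n ω
    constructor
    · intro h
      by_contra hne
      exact Set.disjoint_left.1 (hdisj hne) (Nat.find_spec (hex ω)) h
    · rintro rfl; exact Nat.find_spec (hex ω)
  set T := prodOp K₁ K₂ with hT
  set G : Ω → WithLp 2 (H₁ × H₂) := fun ω =>
    ((Real.sqrt ((μ (s (idx ω))).toReal)⁻¹ : ℝ) : 𝕜) • T (b (idx ω)) with hG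
  set F₁ : Ω → H₁ := fun ω => (G ω).fst with hF₁
  set F₂ : Ω → H₂ := fun ω => (G ω).snd with hF₂
  have key : ∀ u : WithLp 2 (H₁ × H₂),
      Measurable (fun ω => (inner 𝕜 (G ω) u : 𝕜)) ∧
        ∫ ω, ‖(inner 𝕜 (G ω) u : 𝕜)‖ ^ 2 ∂μ = ‖ContinuousLinearMap.adjoint T u‖ ^ 2 :=
    fun u => key_integral μ s hsmeas hdisj hcover hpos hfin idx hidx b T G (fun ω => rfl) u
  have hGeq : ∀ ω, (WithLp.equiv 2 (H₁ × H₂)).symm (F₁ ω, F₂ ω) = G ω := fun ω => rfl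
  refine ⟨F₁, F₂, ?_, ?_, ?_⟩
  · -- K₁-frame
    refine ⟨1, max 1 (‖K₁‖ ^ 2), one_pos, le_max_left _ _, frame_of_eq μ K₁ F₁ ?_⟩
    intro u₁
    set u : WithLp 2 (H₁ × H₂) := (WithLp.equiv 2 (H₁ × H₂)).symm (u₁, 0) with hu
    have hiu : ∀ ω, (inner 𝕜 (G ω) u : 𝕜) = inner 𝕜 (F₁ ω) u₁ := by
      intro ω
      rw [WithLp.prod_inner_apply]
      simp [hu]
      rfl
    have hadj : ‖ContinuousLinearMap.adjoint T u‖ ^ 2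
        = ‖ContinuousLinearMap.adjoint K₁ u₁‖ ^ 2 := by
      rw [hT, adjoint_prodOp, WithLp.prod_norm_sq_eq_of_L2, prodOp_fst, prodOp_snd]
      simp [hu]
    obtain ⟨hm, hi⟩ := key u
    refine ⟨by simpa [hiu] using hm, ?_⟩
    calc ∫ ω, ‖(inner 𝕜 (F₁ ω) u₁ : 𝕜)‖ ^ 2 ∂μ
        = ∫ ω, ‖(inner 𝕜 (G ω) u : 𝕜)‖ ^ 2 ∂μ := by simp_rw [hiu]
      _ = ‖ContinuousLinearMap.adjoint T u‖ ^ 2 := hi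
      _ = ‖ContinuousLinearMap.adjoint K₁ u₁‖ ^ 2 := hadj
  · -- K₂-frame
    refine ⟨1, max 1 (‖K₂‖ ^ 2), one_pos, le_max_left _ _, frame_of_eq μ K₂ F₂ ?_⟩
    intro u₂
    set u : WithLp 2 (H₁ × H₂) := (WithLp.equiv 2 (H₁ × H₂)).symm (0, u₂) with hu
    have hiu : ∀ ω, (inner 𝕜 (G ω) u : 𝕜) = inner 𝕜 (F₂ ω) u₂ := by
      intro ω
      rw [WithLp.prod_inner_apply]
      simp [hu]
      rfl
    have hadj : ‖ContinuousLinearMap.adjoint T u‖ ^ 2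
        = ‖ContinuousLinearMap.adjoint K₂ u₂‖ ^ 2 := by
      rw [hT, adjoint_prodOp, WithLp.prod_norm_sq_eq_of_L2, prodOp_fst, prodOp_snd]
      simp [hu]
    obtain ⟨hm, hi⟩ := key u
    refine ⟨by simpa [hiu] using hm, ?_⟩
    calc ∫ ω, ‖(inner 𝕜 (F₂ ω) u₂ : 𝕜)‖ ^ 2 ∂μ
        = ∫ ω, ‖(inner 𝕜 (G ω) u : 𝕜)‖ ^ 2 ∂μ := by simp_rw [hiu]
      _ = ‖ContinuousLinearMap.adjoint T u‖ ^ 2 := hi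
      _ = ‖ContinuousLinearMap.adjoint K₂ u₂‖ ^ 2 := hadj
  · -- product frame
    exact ⟨1, max 1 (‖prodOp K₁ K₂‖ ^ 2), one_pos, le_max_left _ _,
      frame_of_eq μ (prodOp K₁ K₂) G key⟩
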